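/- Let d ≥ 1 and let S be a symmetric, irreflexive set of pairs of indices from {1,…,d} such that the simple graph on {1,…,d} whose edges are the pairs in S is connected. Then the complex Lie subalgebra of gl(d,ℂ) generated by the set of all diagonal matrices together with the matrix units {E_{ij} : (i,j) ∈ S} is all of gl(d,ℂ). -/

import Mathlib

attribute [local instance 100] LieRing.ofAssociativeRing

/-- Let `d ≥ 1` and let `S` be a symmetric, irreflexive set of pairs of indices
from `{1, …, d}` such that the simple graph on `Fin d` whose edges are the pairs in `S` is
connected. Then the complex Lie subalgebra of `gl(d, ℂ)` generated by all diagonal matrices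
together with the matrix units `E i j` for `(i, j) ∈ S` is all of `gl(d, ℂ)`. -/
theorem stmt_1 (d : ℕ) (hd : 1 ≤ d) (S : Set (Fin d × Fin d))
    (hsymm : ∀ i j : Fin d, (i, j) ∈ S → (j, i) ∈ S)
    (hirr : ∀ i : Fin d, (i, i) ∉ S)
    (hconn : (SimpleGraph.mk (fun i j => (i, j) ∈ S)
        ⟨fun i j h => hsymm i j h⟩ ⟨fun i h => hirr i h⟩).Connected) :
    LieSubalgebra.lieSpan ℂ (Matrix (Fin d) (Fin d) ℂ)
      ({M : Matrix (Fin d) (Fin d) ℂ | M.IsDiag} ∪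
        {M : Matrix (Fin d) (Fin d) ℂ | ∃ p ∈ S, M = Matrix.single p.1 p.2 (1 : ℂ)}) =
      ⊤ := by
  set G : SimpleGraph (Fin d) := SimpleGraph.mk (fun i j => (i, j) ∈ S)
      ⟨fun i j h => hsymm i j h⟩ ⟨fun i h => hirr i h⟩ with hG
  set L := LieSubalgebra.lieSpan ℂ (Matrix (Fin d) (Fin d) ℂ)
      ({M : Matrix (Fin d) (Fin d) ℂ | M.IsDiag} ∪
        {M : Matrix (Fin d) (Fin d) ℂ | ∃ p ∈ S, M = Matrix.single p.1 p.2 (1 : ℂ)})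
      with hL
  have hsub := LieSubalgebra.subset_lieSpan (R := ℂ)
      (L := Matrix (Fin d) (Fin d) ℂ)
      (s := ({M : Matrix (Fin d) (Fin d) ℂ | M.IsDiag} ∪
        {M : Matrix (Fin d) (Fin d) ℂ | ∃ p ∈ S, M = Matrix.single p.1 p.2 (1 : ℂ)}))
  -- every std basis matrix with distinct indices connected by a walk lies in L
  have key : ∀ (i j : Fin d), i ≠ j → ∀ (_ : G.Walk i j),
      Matrix.single i j (1 : ℂ) ∈ L := by
    intro i j hij p
    induction p with
    | nil => exact absurd rfl hij
    | @cons i k j hik q ih =>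
      by_cases hkj : k = j
      · cases hkj
        exact hsub (Or.inr ⟨(i, k), show (i, k) ∈ S from hik, rfl⟩)
      · have hE1 : Matrix.single i k (1 : ℂ) ∈ L :=
          hsub (Or.inr ⟨(i, k), show (i, k) ∈ S from hik, rfl⟩)
        have hE2 : Matrix.single k j (1 : ℂ) ∈ L := ih hkj
        have hb : ⁅Matrix.single i k (1 : ℂ), Matrix.single k j (1 : ℂ)⁆
            = Matrix.single i j (1 : ℂ) := by
          rw [Ring.lie_def, Matrix.single_mul_single_same,
            Matrix.single_mul_single_of_ne (h := Ne.symm hij), one_mul, sub_zero]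
        have := L.lie_mem hE1 hE2
        rwa [hb] at this
  have keyc : ∀ (i j : Fin d) (c : ℂ), Matrix.single i j c ∈ L := by
    intro i j c
    by_cases hij : i = j
    · subst hij
      refine hsub (Or.inl ?_)
      intro a b hab
      simp only [Matrix.single, Matrix.of_apply]
      rw [if_neg]
      rintro ⟨rfl, rfl⟩
      exact hab rfl
    · have h1 : Matrix.single i j (1 : ℂ) ∈ L :=
        key i j hij (hconn i j).some
      have := L.smul_mem c h1
      rwa [Matrix.smul_single, smul_eq_mul, mul_one] at this
  rw [eq_top_iff]
  intro M _
  rw [Matrix.matrix_eq_sum_single M]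
  exact L.sum_mem fun i _ => L.sum_mem fun j _ => keyc i j (M i j)
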